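/- Let φ = (1+√5)/2, define g : ℕ → {0,1} by g(0)=1, g(1)=0, and for n ≥ 2: g(n) = 1 - g(m) if there exists m ∈ ℕ with ⌊nφ⌋ = ⌊m(φ+1)⌋ + 1, and g(n) = 1 otherwise. Let h be Hofstadter's G-sequence (h(0)=0, h(n)=n-h(h(n-1))). Then for all n ≥ 2: g(n) = 1 - g(h(n-1)) if h(n-2) < h(n-1), and g(n) = 1 otherwise. -/

import Mathlib

noncomputable def phi : ℝ := (1 + Real.sqrt 5) / 2

/-- The recursive specification of the {0,1}-valued function g. -/
def gSpec (g : ℕ → ℕ) : Prop :=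
  g 0 = 1 ∧ g 1 = 0 ∧ (∀ n, g n ≤ 1) ∧
  ∀ n : ℕ, 2 ≤ n →
    (∀ m : ℕ, ⌊(n : ℝ) * phi⌋ = ⌊(m : ℝ) * (phi + 1)⌋ + 1 → g n = 1 - g m) ∧
    ((¬ ∃ m : ℕ, ⌊(n : ℝ) * phi⌋ = ⌊(m : ℝ) * (phi + 1)⌋ + 1) → g n = 1)

noncomputable def psi : ℝ := phi - 1

lemma phi_irr : Irrational phi := Real.goldenRatio_irrational

lemma sqrt5_sq : Real.sqrt 5 * Real.sqrt 5 = 5 :=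
  Real.mul_self_sqrt (by norm_num)

lemma sqrt5_gt_two : (2:ℝ) < Real.sqrt 5 := by
  nlinarith [sqrt5_sq, Real.sqrt_nonneg 5]

lemma sqrt5_lt_three : Real.sqrt 5 < 3 := by
  nlinarith [sqrt5_sq, Real.sqrt_nonneg 5]

lemma psi_pos : 0 < psi := by unfold psi phi; linarith [sqrt5_gt_two]

lemma psi_lt_one : psi < 1 := by unfold psi phi; linarith [sqrt5_lt_three]

lemma half_lt_psi : 1/2 < psi := by unfold psi phi; linarith [sqrt5_gt_two]

lemma phi_eq : phi = 1 + psi := by unfold psi; ring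

lemma phi_pos : 0 < phi := by rw [phi_eq]; linarith [psi_pos]

lemma phi_mul_psi : phi * psi = 1 := by
  unfold psi phi; nlinarith [sqrt5_sq]

lemma psi_sq : psi * psi = 1 - psi := by
  have h := phi_mul_psi
  rw [phi_eq] at h; nlinarith

lemma irr_nat_mul_phi (n : ℕ) (hn : n ≠ 0) : Irrational ((n:ℝ) * phi) :=
  phi_irr.natCast_mul hn

lemma irr_nat_mul_psi (n : ℕ) (hn : n ≠ 0) : Irrational ((n:ℝ) * psi) := by
  have h : (n:ℝ) * psi = (n:ℝ) * phi - n := by unfold psi; ring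
  rw [h]
  exact (irr_nat_mul_phi n hn).sub_natCast n

lemma natFloor_lt_self {x : ℝ} (hx0 : 0 ≤ x) (hx : Irrational x) :
    (⌊x⌋₊ : ℝ) < x :=
  (Nat.floor_le hx0).lt_of_ne (fun he => hx.ne_nat _ he.symm)

/-- `H n = ⌊(n+1)ψ⌋` is the closed form of Hofstadter's G. -/
noncomputable def H (n : ℕ) : ℕ := ⌊((n:ℝ)+1) * psi⌋₊

lemma H_rec (m : ℕ) : H (H m) + H (m+1) = m + 1 := by
  set x : ℝ := ((m:ℝ)+1) * psi with hx
  have hx0 : 0 ≤ x := mul_nonneg (by positivity) psi_pos.le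
  have hxirr : Irrational x := by
    have := irr_nat_mul_psi (m+1) (by omega)
    push_cast at this
    exact this
  set a : ℕ := H m with ha
  have ha' : a = ⌊x⌋₊ := rfl
  set f : ℝ := x - a with hf
  have hxaf : x = (a:ℝ) + f := by rw [hf]; ring
  have hf0 : 0 < f := by
    have h1 := natFloor_lt_self hx0 hxirr
    rw [← ha'] at h1
    simp only [hf]; linarith
  have hf1 : f < 1 := by
    have h1 := Nat.lt_floor_add_one x
    rw [← ha'] at h1
    push_cast at h1
    simp only [hf]; linarith
  have haM : (a:ℝ) < (m:ℝ) + 1 := by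
    have h1 : x < (m:ℝ) + 1 := by
      rw [hx]; nlinarith [psi_lt_one, (by positivity : (0:ℝ) < (m:ℝ)+1)]
    have h2 : (a:ℝ) ≤ x := by rw [hxaf]; linarith
    linarith
  have haM' : a < m + 1 := by exact_mod_cast haM
  have hvalN : H (m+1) = ⌊(a:ℝ) + f + psi⌋₊ := by
    unfold H
    congr 1
    push_cast
    rw [← hxaf, hx]; ring
  have hvala : H a = ⌊(m:ℝ) + 1 - a - f + (1-f) * psi⌋₊ := by
    unfold H
    congr 1
    have hax : (a:ℝ) = ((m:ℝ)+1)*psi - f := by rw [hf, hx]; ring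
    rw [hax]
    linear_combination ((m:ℝ)+1) * psi_sq
  have hfne : f ≠ 1 - psi := by
    intro he
    have hirr : Irrational (((m:ℝ)+2) * psi) := by
      have := irr_nat_mul_psi (m+2) (by omega)
      push_cast at this
      exact this
    apply hirr.ne_nat (a+1)
    have : ((m:ℝ)+2) * psi = x + psi := by rw [hx]; ring
    rw [this, hxaf, he]
    push_cast; ring
  have haM2 : (a:ℝ) ≤ m := by exact_mod_cast Nat.lt_succ_iff.mp haM'
  rcases lt_or_gt_of_ne hfne with hc | hc
  · -- f < 1 - psi : H (m+1) = a, H a = m + 1 - a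
    have hHN : H (m+1) = a := by
      rw [hvalN, Nat.floor_eq_iff (by nlinarith [psi_pos, hf0, hf1, haM2, (Nat.cast_nonneg a : (0:ℝ) ≤ a)])]
      constructor
      · push_cast; linarith [psi_pos]
      · push_cast; linarith
    have hHa : H a = m + 1 - a := by
      rw [hvala, Nat.floor_eq_iff (by nlinarith [psi_sq, psi_pos, psi_lt_one, hf0, hf1, haM2, (Nat.cast_nonneg a : (0:ℝ) ≤ a)])]
      have hcast : ((m + 1 - a : ℕ) : ℝ) = (m:ℝ) + 1 - a := by
        have h2 : m + 1 - a + a = m + 1 := by omega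
        have h3 : ((m + 1 - a : ℕ) : ℝ) + (a:ℝ) = (m:ℝ) + 1 := by
          exact_mod_cast congrArg (Nat.cast : ℕ → ℝ) h2
        linarith
      rw [hcast]
      constructor
      · nlinarith [psi_sq]
      · nlinarith [psi_lt_one, psi_pos]
    rw [hHa, hHN]
    omega
  · -- f > 1 - psi : H (m+1) = a + 1, H a = m - a
    have hHN : H (m+1) = a + 1 := by
      rw [hvalN, Nat.floor_eq_iff (by nlinarith [psi_pos, hf0, hf1, haM2, (Nat.cast_nonneg a : (0:ℝ) ≤ a)])]
      push_cast
      constructor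
      · linarith
      · linarith [psi_lt_one]
    have hHa : H a = m - a := by
      rw [hvala, Nat.floor_eq_iff (by nlinarith [psi_pos, hf0, hf1, haM2, (Nat.cast_nonneg a : (0:ℝ) ≤ a)])]
      have hle : a ≤ m := by omega
      have hcast : ((m - a : ℕ) : ℝ) = (m:ℝ) - a := by
        have h2 : m - a + a = m := by omega
        have h3 : ((m - a : ℕ) : ℝ) + (a:ℝ) = (m:ℝ) := by
          exact_mod_cast congrArg (Nat.cast : ℕ → ℝ) h2
        linarith
      rw [hcast]
      constructor
      · nlinarith [psi_pos]
      · nlinarith [psi_sq]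
    rw [hHa, hHN]
    omega

lemma H_lt_succ (m : ℕ) : H m < m + 1 := by
  unfold H
  rw [Nat.floor_lt (mul_nonneg (by positivity) psi_pos.le)]
  push_cast
  nlinarith [psi_lt_one, psi_pos, (by positivity : (0:ℝ) < (m:ℝ)+1)]

lemma h_eq_H (h : ℕ → ℕ) (h0 : h 0 = 0)
    (hrec : ∀ n : ℕ, 1 ≤ n → h n = n - h (h (n - 1))) :
    ∀ n, h n = H n := by
  intro n
  induction n using Nat.strong_induction_on with
  | _ n ih =>
    match n with
    | 0 =>
      rw [h0]
      unfold H
      symm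
      rw [Nat.floor_eq_zero]
      push_cast
      linarith [psi_lt_one]
    | (m+1) =>
      rw [hrec (m+1) (by omega)]
      simp only [Nat.add_sub_cancel]
      rw [ih m (by omega), ih (H m) (H_lt_succ m)]
      have := H_rec m
      omega

lemma int_floor_phi (n : ℕ) : ⌊(n:ℝ) * phi⌋ = (⌊(n:ℝ) * psi⌋₊ : ℤ) + n := by
  have h1 : (n:ℝ) * phi = (n:ℝ) * psi + n := by rw [phi_eq]; ring
  rw [h1, Int.floor_add_natCast, Int.natCast_floor_eq_floor (mul_nonneg (by positivity) psi_pos.le)]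

lemma int_floor_phi_add_one (k : ℕ) :
    ⌊(k:ℝ) * (phi + 1)⌋ = ⌊(k:ℝ) * phi⌋ + k := by
  have h1 : (k:ℝ) * (phi + 1) = (k:ℝ) * phi + k := by ring
  rw [h1, Int.floor_add_natCast]

/-- Forward direction: if the floor condition holds, the equation holds for M = ⌊nψ⌋. -/
lemma lemmaC (n : ℕ) (hn : 2 ≤ n)
    (hlt : ⌊((n:ℝ) - 1) * psi⌋₊ < ⌊(n:ℝ) * psi⌋₊) :
    ⌊(n:ℝ) * phi⌋ = ⌊((⌊(n:ℝ) * psi⌋₊ : ℕ) : ℝ) * (phi + 1)⌋ + 1 := by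
  set M : ℕ := ⌊(n:ℝ) * psi⌋₊ with hM
  rw [int_floor_phi, int_floor_phi_add_one]
  have hn1 : (1:ℝ) ≤ n := by exact_mod_cast (by omega : 1 ≤ n)
  have hMlt : (M:ℝ) < (n:ℝ) * psi :=
    natFloor_lt_self (mul_nonneg (by positivity) psi_pos.le) (irr_nat_mul_psi n (by omega))
  have hfloorMphi : ⌊(M:ℝ) * phi⌋ = (n:ℤ) - 1 := by
    rw [Int.floor_eq_iff]
    constructor
    · -- n - 1 ≤ M φ
      have h1 : ((n:ℝ) - 1) * psi < M := by
        exact (Nat.floor_lt (by nlinarith [psi_pos])).mp hlt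
      have h2 : ((n:ℝ) - 1) * psi * phi < (M:ℝ) * phi := by
        nlinarith [phi_pos]
      have h3 : ((n:ℝ) - 1) * psi * phi = (n:ℝ) - 1 := by
        nlinarith [phi_mul_psi]
      push_cast
      linarith
    · -- M φ < n
      have h2 : (M:ℝ) * phi < (n:ℝ) * psi * phi := by
        nlinarith [phi_pos]
      have h3 : (n:ℝ) * psi * phi = n := by nlinarith [phi_mul_psi]
      push_cast
      linarith
  rw [hfloorMphi]
  ring

/-- Backward direction: any solution of the equation forces k = ⌊nψ⌋ and the floor condition. -/
lemma lemmaD (n : ℕ) (hn : 2 ≤ n) (k : ℕ)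
    (heq : ⌊(n:ℝ) * phi⌋ = ⌊(k:ℝ) * (phi + 1)⌋ + 1) :
    k = ⌊(n:ℝ) * psi⌋₊ ∧ ⌊((n:ℝ) - 1) * psi⌋₊ < ⌊(n:ℝ) * psi⌋₊ := by
  set M : ℕ := ⌊(n:ℝ) * psi⌋₊ with hM
  rw [int_floor_phi, int_floor_phi_add_one] at heq
  have hn1 : (2:ℝ) ≤ n := by exact_mod_cast hn
  have hMlt : (M:ℝ) < (n:ℝ) * psi :=
    natFloor_lt_self (mul_nonneg (by positivity) psi_pos.le) (irr_nat_mul_psi n (by omega))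
  have hnψM : (n:ℝ) * psi < M + 1 := Nat.lt_floor_add_one _
  have hkφle : (⌊(k:ℝ) * phi⌋ : ℝ) ≤ (k:ℝ) * phi := Int.floor_le _
  have hkφlt : (k:ℝ) * phi < ⌊(k:ℝ) * phi⌋ + 1 := Int.lt_floor_add_one _
  have heqR : (M:ℝ) + n = (⌊(k:ℝ) * phi⌋ : ℝ) + k + 1 := by
    exact_mod_cast congrArg (Int.cast : ℤ → ℝ) heq
  -- n φ > k φ + k, hence n > k φ, hence n ψ > k
  have e1 : (k:ℝ) * phi + k < (n:ℝ) * phi := by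
    have hφ : (n:ℝ) * phi = (n:ℝ) * psi + n := by rw [phi_eq]; ring
    rw [hφ]
    linarith
  have e2 : (k:ℝ) * phi < n := by
    have h1 := mul_lt_mul_of_pos_right e1 psi_pos
    have hA : (n:ℝ) * phi * psi = n := by
      rw [mul_assoc, phi_mul_psi, mul_one]
    have hB : ((k:ℝ) * phi + k) * psi = (k:ℝ) * phi := by
      linear_combination (k:ℝ) * phi_mul_psi - (k:ℝ) * phi_eq
    rw [hA, hB] at h1
    exact h1
  have e3 : (k:ℝ) < (n:ℝ) * psi := by
    have h1 := mul_lt_mul_of_pos_right e2 psi_pos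
    have hB : (k:ℝ) * phi * psi = k := by rw [mul_assoc, phi_mul_psi, mul_one]
    rw [hB] at h1
    exact h1
  have hkM : k ≤ M := Nat.le_floor e3.le
  -- n φ < k φ + k + 2, hence n < k φ + 2ψ, hence n ψ < k + 1
  have e4 : (n:ℝ) * phi < (k:ℝ) * phi + k + 2 := by
    have hφ : (n:ℝ) * phi = (n:ℝ) * psi + n := by rw [phi_eq]; ring
    rw [hφ]
    linarith
  have e5 : (n:ℝ) < (k:ℝ) * phi + 2 * psi := by
    have h1 := mul_lt_mul_of_pos_right e4 psi_pos
    have hA : (n:ℝ) * phi * psi = n := by rw [mul_assoc, phi_mul_psi, mul_one]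
    have hB : ((k:ℝ) * phi + k + 2) * psi = (k:ℝ) * phi + 2 * psi := by
      linear_combination (k:ℝ) * phi_mul_psi - (k:ℝ) * phi_eq
    rw [hA, hB] at h1
    exact h1
  have e6 : (n:ℝ) * psi < k + 1 := by
    have h1 := mul_lt_mul_of_pos_right e5 psi_pos
    have hB : ((k:ℝ) * phi + 2 * psi) * psi = k + 2 * (psi * psi) := by
      linear_combination (k:ℝ) * phi_mul_psi
    rw [hB, psi_sq] at h1
    linarith [half_lt_psi]
  have hMk : M ≤ k := by
    have : (M:ℝ) < (k:ℝ) + 1 := lt_of_le_of_lt hMlt.le e6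
    exact_mod_cast Nat.lt_add_one_iff.mp (by exact_mod_cast this)
  have hkMeq : k = M := le_antisymm hkM hMk
  refine ⟨hkMeq, ?_⟩
  -- from heq : M + n = ⌊kφ⌋ + k + 1 with k = M, so ⌊kφ⌋ = n - 1
  have hkMZ : (k:ℤ) = (M:ℤ) := by exact_mod_cast hkMeq
  rw [← hkMZ] at heq
  have hfloorMphi : ⌊(k:ℝ) * phi⌋ = (n:ℤ) - 1 := by linarith [heq]
  have hMpos : 1 ≤ k := by
    rcases Nat.eq_zero_or_pos k with h0 | h1
    · exfalso
      subst h0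
      simp at hfloorMphi
      omega
    · exact h1
  have hlow : ((n:ℝ) - 1) < (k:ℝ) * phi := by
    have h1 : ((((n:ℤ) - 1) : ℤ) : ℝ) ≤ (k:ℝ) * phi := by
      rw [← hfloorMphi]; exact Int.floor_le _
    have h2 : (k:ℝ) * phi ≠ ((((n:ℤ) - 1) : ℤ) : ℝ) :=
      (irr_nat_mul_phi k (by omega)).ne_int ((n:ℤ) - 1)
    push_cast at h1 h2 ⊢
    exact lt_of_le_of_ne h1 (fun he => h2 he.symm)
  have h3 : ((n:ℝ) - 1) * psi < k := by
    have h1 := mul_lt_mul_of_pos_right hlow psi_pos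
    have hB : (k:ℝ) * phi * psi = k := by rw [mul_assoc, phi_mul_psi, mul_one]
    rw [hB] at h1
    exact h1
  rw [← hkMeq]
  exact (Nat.floor_lt (by nlinarith [psi_pos, hn1])).mpr h3

theorem stmt9 (g : ℕ → ℕ) (hg : gSpec g)
    (h : ℕ → ℕ) (h0 : h 0 = 0)
    (hrec : ∀ n : ℕ, 1 ≤ n → h n = n - h (h (n - 1))) :
    ∀ n : ℕ, 2 ≤ n →
      (h (n - 2) < h (n - 1) → g n = 1 - g (h (n - 1))) ∧
      (¬ h (n - 2) < h (n - 1) → g n = 1) := by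
  intro n hn
  obtain ⟨g0, g1, gle, gspec⟩ := hg
  obtain ⟨c1, c2⟩ := gspec n hn
  have hEq := h_eq_H h h0 hrec
  have hcast1 : ((n-1 : ℕ):ℝ) = (n:ℝ) - 1 := by
    have : n - 1 + 1 = n := by omega
    have h2 : ((n-1:ℕ):ℝ) + 1 = (n:ℝ) := by
      exact_mod_cast congrArg (Nat.cast : ℕ → ℝ) this
    linarith
  have hcast2 : ((n-2 : ℕ):ℝ) = (n:ℝ) - 2 := by
    have : n - 2 + 2 = n := by omega
    have h2 : ((n-2:ℕ):ℝ) + 2 = (n:ℝ) := by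
      exact_mod_cast congrArg (Nat.cast : ℕ → ℝ) this
    linarith
  have hh1 : h (n-1) = ⌊(n:ℝ) * psi⌋₊ := by
    rw [hEq]
    unfold H
    congr 1
    rw [hcast1]
    ring
  have hh2 : h (n-2) = ⌊((n:ℝ) - 1) * psi⌋₊ := by
    rw [hEq]
    unfold H
    congr 1
    rw [hcast2]
    ring
  constructor
  · intro hlt
    rw [hh1, hh2] at hlt
    rw [hh1]
    exact c1 _ (lemmaC n hn hlt)
  · intro hnlt
    apply c2
    rintro ⟨k, hk⟩
    obtain ⟨_, hk2⟩ := lemmaD n hn k hk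
    rw [hh1, hh2] at hnlt
    exact hnlt hk2
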